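/- For a>1, the Jacobian of F at (1,0) is the diagonal matrix diag(-c(1-k)s, -cs), with both eigenvalues strictly negative, so (1,0) is asymptotically stable for all k,s∈(0,1). -/

import Mathlib

open Real Set Filter Topology

noncomputable def Fx (c k s a x y : ℝ) : ℝ :=
  c * ((1 - x) * (1 - k) * s * (1 - y) ^ a - x * (1 - s) * (1 - x) ^ a)

noncomputable def Fy (c k s a x y : ℝ) : ℝ :=
  c * ((1 - y) * (1 - k) * (1 - s) * (1 - x) ^ a - y * s * (1 - y) ^ a)

theorem stmt_10 (a c k s : ℝ) (ha : 1 < a) (hc : 0 < c)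
    (hk : k ∈ Ioo (0:ℝ) 1) (hs : s ∈ Ioo (0:ℝ) 1) :
    HasFDerivAt (fun p : ℝ × ℝ => (Fx c k s a p.1 p.2, Fy c k s a p.1 p.2))
      ((((-(c * (1 - k) * s)) • ContinuousLinearMap.fst ℝ ℝ ℝ).prod
        ((-(c * s)) • ContinuousLinearMap.snd ℝ ℝ ℝ)) :
        ℝ × ℝ →L[ℝ] ℝ × ℝ)
      ((1 : ℝ), (0 : ℝ)) ∧
    -(c * (1 - k) * s) < 0 ∧ -(c * s) < 0 := by
  obtain ⟨hk0, hk1⟩ := hk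
  obtain ⟨hs0, hs1⟩ := hs
  have ha1 : a - 1 ≠ 0 := by linarith
  have ha0 : a ≠ 0 := by linarith
  have hu : HasFDerivAt (fun p : ℝ × ℝ => 1 - p.1)
      ((0 : ℝ × ℝ →L[ℝ] ℝ) - ContinuousLinearMap.fst ℝ ℝ ℝ) ((1:ℝ), (0:ℝ)) :=
    (hasFDerivAt_const (1:ℝ) _).sub (hasFDerivAt_fst)
  have hw : HasFDerivAt (fun p : ℝ × ℝ => 1 - p.2)
      ((0 : ℝ × ℝ →L[ℝ] ℝ) - ContinuousLinearMap.snd ℝ ℝ ℝ) ((1:ℝ), (0:ℝ)) :=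
    (hasFDerivAt_const (1:ℝ) _).sub (hasFDerivAt_snd)
  have h0 : HasDerivAt (fun t : ℝ => t ^ a) (a * ((1:ℝ) - 1) ^ (a-1)) ((1:ℝ) - 1) :=
    Real.hasDerivAt_rpow_const (Or.inr ha.le)
  have h1 : HasDerivAt (fun t : ℝ => t ^ a) (a * ((1:ℝ) - 0) ^ (a-1)) ((1:ℝ) - 0) :=
    Real.hasDerivAt_rpow_const (Or.inr ha.le)
  have hvx := hu.rpow_const (Or.inr ha.le)
  have hvy := hw.rpow_const (Or.inr ha.le)
  have g1 := (((hu.mul_const (1-k)).mul_const s).mul hvy)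
  have g2 := ((hasFDerivAt_fst.mul_const (1-s)).mul hvx)
  have hFx : HasFDerivAt (fun p : ℝ × ℝ => Fx c k s a p.1 p.2)
      ((-(c * (1 - k) * s)) • ContinuousLinearMap.fst ℝ ℝ ℝ) ((1:ℝ), (0:ℝ)) := by
    have H := (g1.sub g2).const_mul c
    simp only [Fx]
    refine HasFDerivAt.congr_fderiv H ?_
    refine ContinuousLinearMap.ext fun p => ?_
    simp [Real.zero_rpow ha1, Real.zero_rpow ha0, Real.one_rpow]
    ring
  have q1 := (((hw.mul_const ((1-k))).mul_const (1-s)).mul hvx)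
  have q2 := ((hasFDerivAt_snd.mul_const s).mul hvy)
  have hFy : HasFDerivAt (fun p : ℝ × ℝ => Fy c k s a p.1 p.2)
      ((-(c * s)) • ContinuousLinearMap.snd ℝ ℝ ℝ) ((1:ℝ), (0:ℝ)) := by
    have H := (q1.sub q2).const_mul c
    simp only [Fy]
    refine HasFDerivAt.congr_fderiv H ?_
    refine ContinuousLinearMap.ext fun p => ?_
    simp [Real.zero_rpow ha1, Real.zero_rpow ha0, Real.one_rpow]
    ring
  have hks : 0 < c * (1 - k) * s := mul_pos (mul_pos hc (by linarith)) hs0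
  have hcs : 0 < c * s := mul_pos hc hs0
  exact ⟨HasFDerivAt.prodMk hFx hFy, by linarith, by linarith⟩
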